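/- Let n ≥ 1, A ∈ ℝ^{n×n}, C ∈ ℝ^{1×n}, L ∈ ℝ^{n×1}, c ∈ ℝ. Suppose ξ : [0,∞) → ℝⁿ, Z : [0,∞) → ℝ and ϑ : [0,∞) → ℝⁿ are differentiable, u₀ : [0,∞) → ℝ is a function, and they satisfy for all t ≥ 0: ξ'(t) = A ξ(t), Z'(t) = −[(c+π²) Z(t) + u₀(t) + C ξ(t)], and ϑ'(t) = (A+LC) ϑ(t) + (A+LC) L Z(t) + L [(c+π²) Z(t) + u₀(t)]. Define the estimate ξ̂(t) = ϑ(t) + L Z(t) and the estimation error η(t) = ξ̂(t) − ξ(t). Then η is differentiable and η'(t) = (A+LC) η(t) for all t ≥ 0. -/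

import Mathlib

open Set Matrix

/-- Error dynamics of the finite-dimensional disturbance observer: if
`ξ' = Aξ`, `Z' = −[(c+π²)Z + u₀ + Cξ]` and
`ϑ' = (A+LC)ϑ + (A+LC)L Z + L[(c+π²)Z + u₀]`, then the estimation error
`η = ξ̂ − ξ = (ϑ + L Z) − ξ` satisfies `η' = (A+LC)η` on `[0,∞)`. -/
theorem disturbance_observer_error_dynamics
    (n : ℕ) (hn : 1 ≤ n)
    (A : Matrix (Fin n) (Fin n) ℝ) (C : Matrix (Fin 1) (Fin n) ℝ)
    (L : Matrix (Fin n) (Fin 1) ℝ) (c : ℝ)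
    (ξ : ℝ → Fin n → ℝ) (Z : ℝ → ℝ) (ϑ : ℝ → Fin n → ℝ) (u₀ : ℝ → ℝ)
    (hξ : ∀ t ∈ Ici (0:ℝ), HasDerivWithinAt ξ (A.mulVec (ξ t)) (Ici 0) t)
    (hZ : ∀ t ∈ Ici (0:ℝ), HasDerivWithinAt Z
      (-((c + Real.pi ^ 2) * Z t + u₀ t + (C.mulVec (ξ t)) 0)) (Ici 0) t)
    (hϑ : ∀ t ∈ Ici (0:ℝ), HasDerivWithinAt ϑ
      ((A + L * C).mulVec (ϑ t)
        + (A + L * C).mulVec (Z t • fun i => L i 0)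
        + ((c + Real.pi ^ 2) * Z t + u₀ t) • fun i => L i 0) (Ici 0) t)
    (ξhat η : ℝ → Fin n → ℝ)
    (hξhat : ξhat = fun t => ϑ t + Z t • fun i => L i 0)
    (hη : η = fun t => ξhat t - ξ t) :
    ∀ t ∈ Ici (0:ℝ), HasDerivWithinAt η ((A + L * C).mulVec (η t)) (Ici 0) t := by
  subst hξhat hη
  intro t ht
  have h := ((hϑ t ht).add ((hZ t ht).smul_const (fun i => L i 0))).sub (hξ t ht)
  convert h using 1
  · rfl
  · rfl
  · rfl
  · rfl
  funext i
  simp [Matrix.mulVec, dotProduct, Matrix.add_apply, Matrix.mul_apply, Fin.sum_univ_one,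
    mul_add, add_mul, sub_mul, mul_sub, Finset.sum_add_distrib, Finset.sum_sub_distrib,
    Finset.mul_sum, Finset.sum_mul, mul_comm, mul_left_comm]
  ring
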